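/- With D₀ = [[1,2],[0,0]] and D₁ = [[1,2],[1,0]], e₀ = (1,0)ᵀ and w = (1,2)ᵀ, for every n ≥ 1 with binary expansion n_{k-1}...n₁n₀, the quantity wᵀ D_{n_{k-1}} ⋯ D_{n₀} e₀ equals the number of odd coefficients of (1+x+x^2)^n. -/

import Mathlib

open Polynomial

/-- The number of odd coefficients of a polynomial over ℤ. -/
noncomputable def oddCoeffCount (p : Polynomial ℤ) : ℕ :=
  (p.support.filter fun j => Odd (p.coeff j)).card

noncomputable def g (n : ℕ) : ℕ := oddCoeffCount ((1 + X + X ^ 2) ^ n)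

def D : ℕ → Matrix (Fin 2) (Fin 2) ℤ
  | 0 => !![1, 2; 0, 0]
  | _ => !![1, 2; 1, 0]

noncomputable def f2 : (ZMod 2)[X] := 1 + X + X ^ 2
noncomputable def S (n : ℕ) : Finset ℕ := (f2 ^ n).support
noncomputable def G (n : ℕ) : ℕ := (S n).card
noncomputable def Tt (n : ℕ) : ℕ := ((S n).filter (fun j => j + 1 ∈ S n)).card

lemma sq2 (p : (ZMod 2)[X]) : p ^ 2 = expand (ZMod 2) 2 p := by
  have h := Polynomial.map_frobenius_expand 2 p
  have hf : frobenius (ZMod 2) 2 = RingHom.id _ := by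
    ext x; simpa [frobenius_def] using ZMod.pow_card x
  rw [hf] at h
  simpa using h.symm

lemma pow_two_mul (n : ℕ) : f2 ^ (2 * n) = expand (ZMod 2) 2 (f2 ^ n) := by
  rw [mul_comm, pow_mul, sq2]

lemma coeff_even_case (n k : ℕ) :
    (f2 ^ (2 * n)).coeff k = if 2 ∣ k then (f2 ^ n).coeff (k / 2) else 0 := by
  rw [pow_two_mul, Polynomial.coeff_expand (by norm_num)]

lemma mem_S {n j : ℕ} : j ∈ S n ↔ (f2 ^ n).coeff j ≠ 0 := Polynomial.mem_support_iff

lemma S_even (n : ℕ) : S (2 * n) = (S n).image (fun j => 2 * j) := by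
  ext k
  simp only [mem_S, coeff_even_case, Finset.mem_image]
  constructor
  · intro h
    have hd : 2 ∣ k := by by_contra hd; simp [hd] at h
    rw [if_pos hd] at h
    exact ⟨k / 2, h, (Nat.mul_div_cancel' hd)⟩
  · rintro ⟨j, hj, rfl⟩
    rw [if_pos ⟨j, rfl⟩]
    simpa [Nat.mul_div_cancel_left] using hj

lemma G_even (n : ℕ) : G (2 * n) = G n := by
  rw [G, G, S_even, Finset.card_image_of_injective _ (fun a b => by omega)]

lemma T_even (n : ℕ) : Tt (2 * n) = 0 := by
  rw [Tt, Finset.card_eq_zero, Finset.filter_eq_empty_iff]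
  intro k hk
  rw [S_even] at hk ⊢
  simp only [Finset.mem_image] at hk ⊢
  rintro ⟨j, hj, hje⟩
  obtain ⟨i, hi, rfl⟩ := hk
  omega

lemma T_le_G (n : ℕ) : Tt n ≤ G n := Finset.card_filter_le _ _

lemma zmod_add_ne (x y : ZMod 2) : x + y ≠ 0 ↔ ¬(x = 0 ↔ y = 0) := by
  revert x y; decide

lemma pow_odd (n : ℕ) : f2 ^ (2 * n + 1) =
    expand (ZMod 2) 2 (f2 ^ n) + X * expand (ZMod 2) 2 (f2 ^ n)
      + X ^ 2 * expand (ZMod 2) 2 (f2 ^ n) := by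
  rw [pow_succ, pow_two_mul, f2]; ring

lemma qcoeff (n k : ℕ) :
    (expand (ZMod 2) 2 (f2 ^ n)).coeff k = if 2 ∣ k then (f2 ^ n).coeff (k / 2) else 0 :=
  Polynomial.coeff_expand (by norm_num) _ _

lemma coeff_odd_odd (n j : ℕ) : (f2 ^ (2 * n + 1)).coeff (2 * j + 1) = (f2 ^ n).coeff j := by
  rw [pow_odd, coeff_add, coeff_add, qcoeff, mul_comm (X : (ZMod 2)[X]),
    mul_comm ((X : (ZMod 2)[X]) ^ 2),
    Polynomial.coeff_mul_X_pow' _ 2, ← pow_one (X : (ZMod 2)[X]),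
    Polynomial.coeff_mul_X_pow' _ 1, qcoeff, qcoeff]
  rcases Nat.eq_zero_or_pos j with rfl | hj
  · norm_num
  · have h1 : ¬ (2 ∣ 2 * j + 1) := by omega
    have h2 : 2 * j + 1 - 1 = 2 * j := by omega
    have h3 : 1 ≤ 2 * j + 1 := by omega
    have h4 : 2 ≤ 2 * j + 1 := by omega
    have h5 : ¬ (2 ∣ 2 * j + 1 - 2) := by omega
    rw [if_neg h1, if_pos h3, if_pos h4, h2, if_neg h5]
    simp [Nat.mul_div_cancel_left, Nat.dvd_mul_right]

lemma coeff_odd_zero (n : ℕ) : (f2 ^ (2 * n + 1)).coeff 0 = (f2 ^ n).coeff 0 := by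
  rw [pow_odd, coeff_add, coeff_add, Polynomial.mul_coeff_zero, Polynomial.mul_coeff_zero, qcoeff]
  simp

lemma coeff_odd_even (n j : ℕ) :
    (f2 ^ (2 * n + 1)).coeff (2 * j + 2) = (f2 ^ n).coeff (j + 1) + (f2 ^ n).coeff j := by
  rw [pow_odd, coeff_add, coeff_add, qcoeff, mul_comm (X : (ZMod 2)[X]),
    mul_comm ((X : (ZMod 2)[X]) ^ 2),
    Polynomial.coeff_mul_X_pow' _ 2, ← pow_one (X : (ZMod 2)[X]),
    Polynomial.coeff_mul_X_pow' _ 1]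
  have h1 : (2 : ℕ) ∣ 2 * j + 2 := by omega
  have h2 : 1 ≤ 2 * j + 2 := by omega
  have h3 : 2 ≤ 2 * j + 2 := by omega
  have h4 : ¬ (2 ∣ 2 * j + 2 - 1) := by omega
  have h5 : 2 * j + 2 - 2 = 2 * j := by omega
  rw [if_pos h1, if_pos h2, if_pos h3, qcoeff, if_neg h4, h5, qcoeff, if_pos ⟨j, rfl⟩]
  have : (2 * j + 2) / 2 = j + 1 := by omega
  rw [this]
  simp [Nat.mul_div_cancel_left, Nat.dvd_mul_right]

noncomputable def P (n : ℕ) : Finset ℕ := (S n).image (· + 1)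
noncomputable def Esym (n : ℕ) : Finset ℕ := (S n ∪ P n) \ (S n ∩ P n)

lemma mem_P {n k : ℕ} : k ∈ P n ↔ ∃ j ∈ S n, j + 1 = k := by simp [P]

lemma zero_not_mem_P (n : ℕ) : 0 ∉ P n := by simp [mem_P]

lemma succ_mem_P {n j : ℕ} : j + 1 ∈ P n ↔ j ∈ S n := by simp [mem_P]

lemma mem_Esym {n k : ℕ} : k ∈ Esym n ↔ ¬(k ∈ S n ↔ k ∈ P n) := by
  simp only [Esym, Finset.mem_sdiff, Finset.mem_union, Finset.mem_inter]
  tauto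

lemma mem_S_odd_odd {n j : ℕ} : 2 * j + 1 ∈ S (2 * n + 1) ↔ j ∈ S n := by
  rw [mem_S, coeff_odd_odd, ← mem_S]

lemma mem_S_odd_even {n j : ℕ} : 2 * j ∈ S (2 * n + 1) ↔ j ∈ Esym n := by
  rcases j with _ | j
  · rw [mem_S, mul_zero, coeff_odd_zero, ← mem_S, mem_Esym]
    have := zero_not_mem_P n
    tauto
  · have h : 2 * (j + 1) = 2 * j + 2 := by ring
    rw [h, mem_S, coeff_odd_even, mem_Esym, succ_mem_P, zmod_add_ne]
    simp only [mem_S, ne_eq]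
    tauto

lemma inter_card (n : ℕ) :
    (S n ∩ P n).card = Tt n := by
  rw [Tt, ← Finset.card_image_of_injective ((S n).filter (fun j => j + 1 ∈ S n))
    (add_left_injective 1)]
  congr 1
  ext k
  simp only [Finset.mem_inter, mem_P, Finset.mem_image, Finset.mem_filter]
  constructor
  · rintro ⟨hk, j, hj, rfl⟩
    exact ⟨j, ⟨hj, hk⟩, rfl⟩
  · rintro ⟨j, ⟨hj, hj1⟩, rfl⟩
    exact ⟨hj1, j, hj, rfl⟩

lemma card_P (n : ℕ) : (P n).card = G n :=
  Finset.card_image_of_injective _ (add_left_injective 1)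

lemma card_Esym (n : ℕ) : (Esym n).card + 2 * Tt n = 2 * G n := by
  have h1 : (Esym n).card + (S n ∩ P n).card = (S n ∪ P n).card :=
    Finset.card_sdiff_add_card_eq_card (Finset.inter_subset_union)
  have h2 : (S n ∪ P n).card + (S n ∩ P n).card = (S n).card + (P n).card :=
    Finset.card_union_add_card_inter _ _
  rw [inter_card] at h1 h2
  rw [card_P] at h2
  have h3 : G n = (S n).card := rfl
  omega

lemma S_odd (n : ℕ) :
    S (2 * n + 1) = (Esym n).image (fun j => 2 * j) ∪ (S n).image (fun j => 2 * j + 1) := by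
  ext k
  rcases Nat.even_or_odd k with ⟨j, rfl⟩ | ⟨j, rfl⟩
  · have hj : j + j = 2 * j := by ring
    rw [hj, mem_S_odd_even]
    simp only [Finset.mem_union, Finset.mem_image]
    constructor
    · intro h; exact Or.inl ⟨j, h, rfl⟩
    · rintro (⟨i, hi, he⟩ | ⟨i, hi, he⟩)
      · obtain rfl : i = j := by omega
        exact hi
      · omega
  · rw [mem_S_odd_odd]
    simp only [Finset.mem_union, Finset.mem_image]
    constructor
    · intro h; exact Or.inr ⟨j, h, rfl⟩
    · rintro (⟨i, hi, he⟩ | ⟨i, hi, he⟩)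
      · omega
      · obtain rfl : i = j := by omega
        exact hi

lemma G_odd (n : ℕ) : G (2 * n + 1) + 2 * Tt n = 3 * G n := by
  have hd : Disjoint ((Esym n).image (fun j => 2 * j)) ((S n).image (fun j => 2 * j + 1)) := by
    rw [Finset.disjoint_left]
    rintro k hk hk'
    simp only [Finset.mem_image] at hk hk'
    obtain ⟨i, _, rfl⟩ := hk
    obtain ⟨i', _, h⟩ := hk'
    omega
  have := card_Esym n
  rw [G, S_odd, Finset.card_union_of_disjoint hd,
    Finset.card_image_of_injective _ (fun a b h => by omega),
    Finset.card_image_of_injective _ (fun a b h => by omega)]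
  rw [← G]
  omega

lemma T_odd (n : ℕ) : Tt (2 * n + 1) + 2 * Tt n = 2 * G n := by
  have hset : (S (2 * n + 1)).filter (fun j => j + 1 ∈ S (2 * n + 1)) =
      (S n \ P n).image (fun j => 2 * j) ∪
        ((S n).filter (fun j => j + 1 ∉ S n)).image (fun j => 2 * j + 1) := by
    ext k
    simp only [Finset.mem_filter, Finset.mem_union, Finset.mem_image, Finset.mem_sdiff]
    rcases Nat.even_or_odd k with ⟨j, rfl⟩ | ⟨j, rfl⟩
    · have hj : j + j = 2 * j := by ring
      rw [hj]
      constructor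
      · rintro ⟨h1, h2⟩
        rw [mem_S_odd_even, mem_Esym] at h1
        rw [mem_S_odd_odd] at h2
        refine Or.inl ⟨j, ⟨h2, ?_⟩, rfl⟩
        intro hp
        exact h1 (iff_of_true h2 hp)
      · rintro (⟨i, ⟨hi1, hi2⟩, he⟩ | ⟨i, hi, he⟩)
        · obtain rfl : i = j := by omega
          constructor
          · rw [mem_S_odd_even, mem_Esym]
            tauto
          · rw [mem_S_odd_odd]; exact hi1
        · omega
    · constructor
      · rintro ⟨h1, h2⟩
        rw [mem_S_odd_odd] at h1
        have h3 : 2 * j + 1 + 1 = 2 * (j + 1) := by ring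
        rw [h3, mem_S_odd_even, mem_Esym, succ_mem_P] at h2
        refine Or.inr ⟨j, ⟨h1, ?_⟩, rfl⟩
        intro hs
        exact h2 (iff_of_true hs h1)
      · rintro (⟨i, hi, he⟩ | ⟨i, hi, he⟩)
        · omega
        · obtain rfl : i = j := by omega
          refine ⟨mem_S_odd_odd.2 hi.1, ?_⟩
          have h3 : 2 * i + 1 + 1 = 2 * (i + 1) := by ring
          rw [h3, mem_S_odd_even, mem_Esym, succ_mem_P]
          tauto
  have hd : Disjoint ((S n \ P n).image (fun j => 2 * j))
      (((S n).filter (fun j => j + 1 ∉ S n)).image (fun j => 2 * j + 1)) := by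
    rw [Finset.disjoint_left]
    rintro k hk hk'
    simp only [Finset.mem_image] at hk hk'
    obtain ⟨i, _, rfl⟩ := hk
    obtain ⟨i', _, h⟩ := hk'
    omega
  have hc1 : (S n \ P n).card + Tt n = G n := by
    have := Finset.card_sdiff_add_card_inter (S n) (P n)
    rw [inter_card] at this
    exact this
  have hc2 : ((S n).filter (fun j => j + 1 ∉ S n)).card + Tt n = G n := by
    have := Finset.card_filter_add_card_filter_not
      (s := S n) (p := fun j => j + 1 ∈ S n)
    rw [Tt, G]
    omega
  rw [Tt, hset, Finset.card_union_of_disjoint hd,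
    Finset.card_image_of_injective _ (fun a b h => by omega),
    Finset.card_image_of_injective _ (fun a b h => by omega)]
  omega

lemma S_one : S 1 = {0, 1, 2} := by
  ext k
  rw [mem_S, pow_one, f2]
  simp only [coeff_add, coeff_one, coeff_X, Polynomial.coeff_X_pow,
    Finset.mem_insert, Finset.mem_singleton]
  rcases k with _ | _ | _ | k <;> simp

lemma G_one : G 1 = 3 := by rw [G, S_one]; decide

lemma T_one : Tt 1 = 2 := by rw [Tt, S_one]; decide

lemma gG (n : ℕ) : g n = G n := by
  have hmap : ((1 + X + X ^ 2 : ℤ[X]) ^ n).map (Int.castRingHom (ZMod 2)) = f2 ^ n := by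
    rw [Polynomial.map_pow, f2]
    simp
  rw [g, oddCoeffCount, G, S, ← hmap]
  congr 1
  ext j
  simp only [Polynomial.mem_support_iff, Finset.mem_filter, Polynomial.coeff_map,
    Int.coe_castRingHom]
  simp only [ne_eq, ZMod.intCast_zmod_eq_zero_iff_dvd]
  rw [Int.odd_iff]
  push_cast
  omega

lemma vecMul_D0 (a b : ℤ) : Matrix.vecMul ![a, b] (D 0) = ![a, 2 * a] := by
  ext i
  fin_cases i <;> simp [D, Matrix.vecMul, dotProduct, Fin.sum_univ_two] <;> ring

lemma vecMul_D1 (a b : ℤ) : Matrix.vecMul ![a, b] (D 1) = ![a + b, 2 * a] := by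
  ext i
  fin_cases i <;> simp [D, Matrix.vecMul, dotProduct, Fin.sum_univ_two] <;> ring

lemma key : ∀ n : ℕ, n ≠ 0 →
    Matrix.vecMul ![1, 2] (((Nat.digits 2 n).reverse.map D).prod) =
      ![(G n : ℤ), 2 * (G n : ℤ) - 2 * (Tt n : ℤ)] := by
  intro n
  induction n using Nat.strong_induction_on with
  | _ n ih =>
    intro hn
    rw [Nat.digits_def' (by norm_num) (Nat.pos_of_ne_zero hn), List.reverse_cons,
      List.map_append, List.prod_append, List.map_cons, List.map_nil, List.prod_cons,
      List.prod_nil, mul_one, ← Matrix.vecMul_vecMul]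
    rcases Nat.eq_zero_or_pos (n / 2) with h0 | hpos
    · have hn1 : n = 1 := by omega
      subst hn1
      norm_num
      rw [vecMul_D1, G_one, T_one]
      ext i; fin_cases i <;> norm_num
    · have IH := ih (n / 2) (by omega) (by omega)
      rw [IH]
      have hle := T_le_G (n / 2)
      rcases Nat.even_or_odd n with he | ho
      · have hmod : n % 2 = 0 := Nat.even_iff.1 he
        have hn2 : n = 2 * (n / 2) := by omega
        have hG : G n = G (n / 2) := by nth_rewrite 1 [hn2]; rw [G_even]
        have hT : Tt n = 0 := by nth_rewrite 1 [hn2]; rw [T_even]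
        rw [hmod, vecMul_D0, hG, hT]
        ext i; fin_cases i <;> simp
      · have hmod : n % 2 = 1 := Nat.odd_iff.1 ho
        have hn2 : n = 2 * (n / 2) + 1 := by omega
        have hG : G n + 2 * Tt (n / 2) = 3 * G (n / 2) := by nth_rewrite 1 [hn2]; exact G_odd _
        have hT : Tt n + 2 * Tt (n / 2) = 2 * G (n / 2) := by nth_rewrite 1 [hn2]; exact T_odd _
        rw [hmod, vecMul_D1]
        have hGz : (G n : ℤ) = 3 * G (n / 2) - 2 * Tt (n / 2) := by
          have := hG; omega
        have hTz : (Tt n : ℤ) = 2 * G (n / 2) - 2 * Tt (n / 2) := by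
          have := hT; omega
        ext i; fin_cases i <;> simp [hGz, hTz] <;> ring

theorem stmt_19 (n : ℕ) (hn : 1 ≤ n) :
    dotProduct ![1, 2]
      ((((Nat.digits 2 n).reverse.map D).prod).mulVec ![1, 0]) = g n := by
  rw [Matrix.dotProduct_mulVec, key n (by omega), gG]
  simp [dotProduct, Fin.sum_univ_two]
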